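/- Let m, n ≥ 1 and let K_{m,n} be the complete bipartite graph with parts A = {u_1,...,u_m} and B = {v_1,...,v_n}. Let a_1,...,a_m and b_1,...,b_n be positive integers with ∑ a_i = ∑ b_j = m + n - 1. Then the number of spanning trees of K_{m,n} in which u_i has degree a_i and v_j has degree b_j for all i, j equals (m-1)!(n-1)! / (∏_{i=1}^m (a_i - 1)! ∏_{j=1}^n (b_j - 1)!). -/

import Mathlib

open Finset

section Aux
open SimpleGraph Sum


section Lemmas

lemma nat_card_unique {α : Type*} {P : α → Prop} {w : α} (hw : P w)
    (h : ∀ x, P x → x = w) : Nat.card {x // P x} = 1 := by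
  rw [Nat.card_eq_one_iff_exists]
  exact ⟨⟨w, hw⟩, fun y => Subtype.ext (h y.1 y.2)⟩

lemma nat_card_option {α : Type*} [Finite α] : Nat.card (Option α) = Nat.card α + 1 := by
  have : Fintype α := Fintype.ofFinite α
  simp [Nat.card_eq_fintype_card]

lemma no_cycle_at_leaf {V : Type*} {G : SimpleGraph V} {v w : V}
    (h : ∀ x, G.Adj v x → x = w) (c : G.Walk v v) : ¬ c.IsCycle := by
  intro hc
  cases c with
  | nil => exact hc.ne_nil rfl
  | @cons _ y _ h1 q =>
    obtain ⟨z, h2, q2, hq⟩ := SimpleGraph.Walk.exists_eq_cons_of_ne h1.ne q.reverse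
    have hmem : s(v, z) ∈ q.reverse.edges := by rw [hq]; simp
    rw [SimpleGraph.Walk.edges_reverse, List.mem_reverse] at hmem
    have hzy : z = y := (h _ h2).trans (h _ h1).symm
    rw [hzy] at hmem
    have := (SimpleGraph.Walk.isTrail_cons _ _).1 hc.isCircuit.isTrail
    exact this.2 hmem

lemma leaf_not_in_cycle {V : Type*} {G : SimpleGraph V} {v w : V}
    (h : ∀ x, G.Adj v x → x = w) {u : V} (c : G.Walk u u) (hc : c.IsCycle) :
    v ∉ c.support := by
  letI : DecidableEq V := Classical.decEq V
  exact fun hv => no_cycle_at_leaf h (c.rotate _ hv) (hc.rotate hv)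

end Lemmas

section Del
variable {A B : Type*} (i0 : A)

def emb : ({i : A // i ≠ i0} ⊕ B) → A ⊕ B := Sum.map Subtype.val id

lemma emb_inj : Function.Injective (emb (B := B) i0) := by
  intro x y h
  cases x <;> cases y <;> simp [emb, Subtype.ext_iff] at h ⊢ <;> tauto

lemma emb_ne (x : {i : A // i ≠ i0} ⊕ B) : emb i0 x ≠ inl i0 := by
  cases x with
  | inl i => simpa [emb] using i.2
  | inr k => simp [emb]

@[simp] lemma emb_inl (i : {i : A // i ≠ i0}) : emb i0 (inl i : {i : A // i ≠ i0} ⊕ B) = inl i.1 := rfl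
@[simp] lemma emb_inr (k : B) : emb i0 (inr k : {i : A // i ≠ i0} ⊕ B) = inr k := rfl

def unemb : (z : A ⊕ B) → z ≠ inl i0 → ({i : A // i ≠ i0} ⊕ B)
  | inl i, h => inl ⟨i, fun hi => h (by rw [hi])⟩
  | inr k, _ => inr k

@[simp] lemma emb_unemb (z : A ⊕ B) (h : z ≠ inl i0) : emb i0 (unemb i0 z h) = z := by
  cases z <;> rfl

lemma unemb_emb (x : {i : A // i ≠ i0} ⊕ B) (h : emb i0 x ≠ inl i0) :
    unemb i0 (emb i0 x) h = x := emb_inj i0 (by simp)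

lemma lift_walk {G : SimpleGraph (A ⊕ B)} :
    ∀ {u v : A ⊕ B} (p : G.Walk u v) (hu : u ≠ inl i0) (hv : v ≠ inl i0),
      inl i0 ∉ p.support →
      ∃ q : (G.comap (emb i0)).Walk (unemb i0 u hu) (unemb i0 v hv),
        q.edges.map (Sym2.map (emb i0)) = p.edges ∧
        q.support.map (emb i0) = p.support := by
  intro u v p
  induction p with
  | nil =>
    intro hu hv _
    exact ⟨SimpleGraph.Walk.nil, by simp, by simp⟩
  | @cons u y v h q ih =>
    intro hu hv hp
    rw [SimpleGraph.Walk.support_cons] at hp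
    simp only [List.mem_cons, not_or] at hp
    have hy : y ≠ inl i0 := fun hy => hp.2 (hy ▸ q.start_mem_support)
    obtain ⟨q', he, hs⟩ := ih hy hv hp.2
    have hadj : (G.comap (emb i0)).Adj (unemb i0 u hu) (unemb i0 y hy) := by
      simp only [SimpleGraph.comap_adj, emb_unemb]; exact h
    refine ⟨SimpleGraph.Walk.cons hadj q', ?_, ?_⟩
    · simp [he]
    · simp [hs]

lemma lift_reachable {G : SimpleGraph (A ⊕ B)} {u v : A ⊕ B}
    (p : G.Walk u v) (hu : u ≠ inl i0) (hv : v ≠ inl i0) (hp : inl i0 ∉ p.support) :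
    (G.comap (emb i0)).Reachable (unemb i0 u hu) (unemb i0 v hv) := by
  obtain ⟨q, -, -⟩ := lift_walk i0 p hu hv hp
  exact ⟨q⟩

lemma lift_cycle {G : SimpleGraph (A ⊕ B)} {v : A ⊕ B}
    (c : G.Walk v v) (hc : c.IsCycle) (hv : v ≠ inl i0) (hsup : inl i0 ∉ c.support) :
    ∃ q : (G.comap (emb i0)).Walk (unemb i0 v hv) (unemb i0 v hv), q.IsCycle := by
  obtain ⟨q, he, hs⟩ := lift_walk i0 c hv hv hsup
  refine ⟨q, ⟨⟨?_, ?_⟩, ?_⟩⟩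
  · constructor
    have : c.edges.Nodup := hc.isCircuit.isTrail.edges_nodup
    rw [← he] at this
    exact this.of_map _
  · intro hq
    subst hq
    have h3 := hc.three_le_length
    have : c.edges.length = 0 := by rw [← he]; simp
    rw [SimpleGraph.Walk.length_edges] at this
    omega
  · have : c.support.tail.Nodup := hc.support_nodup
    rw [← hs, ← List.map_tail] at this
    exact this.of_map _

end Del

section Ext
variable {A B : Type*} (i0 : A) (j : B)

def extG (T' : SimpleGraph ({i : A // i ≠ i0} ⊕ B)) : SimpleGraph (A ⊕ B) :=
  T'.map (⟨emb i0, emb_inj i0⟩ : _ ↪ A ⊕ B) ⊔ SimpleGraph.fromEdgeSet {s(inl i0, inr j)}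

lemma extG_adj (T' : SimpleGraph ({i : A // i ≠ i0} ⊕ B)) (x y : A ⊕ B) :
    (extG i0 j T').Adj x y ↔
      (∃ x' y', T'.Adj x' y' ∧ emb i0 x' = x ∧ emb i0 y' = y) ∨
      (x = inl i0 ∧ y = inr j) ∨ (x = inr j ∧ y = inl i0) := by
  rw [extG, SimpleGraph.sup_adj, SimpleGraph.map_adj]
  simp only [extG, SimpleGraph.sup_adj, SimpleGraph.map_adj, Function.Embedding.coeFn_mk,
    SimpleGraph.fromEdgeSet_adj, Set.mem_singleton_iff, Sym2.eq_iff]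
  constructor
  · rintro (⟨x', y', h, rfl, rfl⟩ | ⟨(⟨rfl, rfl⟩ | ⟨rfl, rfl⟩), hne⟩)
    · exact Or.inl ⟨x', y', h, rfl, rfl⟩
    · exact Or.inr (Or.inl ⟨rfl, rfl⟩)
    · exact Or.inr (Or.inr ⟨rfl, rfl⟩)
  · rintro (⟨x', y', h, rfl, rfl⟩ | ⟨rfl, rfl⟩ | ⟨rfl, rfl⟩)
    · exact Or.inl ⟨x', y', h, rfl, rfl⟩
    · exact Or.inr ⟨Or.inl ⟨rfl, rfl⟩, by simp⟩
    · exact Or.inr ⟨Or.inr ⟨rfl, rfl⟩, by simp⟩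

lemma comap_extG (T' : SimpleGraph ({i : A // i ≠ i0} ⊕ B)) :
    (extG i0 j T').comap (emb i0) = T' := by
  ext x y
  simp only [SimpleGraph.comap_adj, extG_adj]
  constructor
  · rintro (⟨x', y', h, hx, hy⟩ | ⟨hx, -⟩ | ⟨-, hy⟩)
    · rwa [emb_inj i0 hx, emb_inj i0 hy] at h
    · exact absurd hx (emb_ne i0 x)
    · exact absurd hy (emb_ne i0 y)
  · intro h
    exact Or.inl ⟨x, y, h, rfl, rfl⟩

lemma extG_comap {T : SimpleGraph (A ⊕ B)}
    (hleaf : ∀ w, T.Adj (inl i0) w ↔ w = inr j) :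
    extG i0 j (T.comap (emb i0)) = T := by
  have hTij : T.Adj (inl i0) (inr j) := (hleaf (inr j)).2 rfl
  ext x y
  rw [extG_adj]
  constructor
  · rintro (⟨x', y', h, rfl, rfl⟩ | ⟨rfl, rfl⟩ | ⟨rfl, rfl⟩)
    · exact h
    · exact hTij
    · exact hTij.symm
  · intro hxy
    by_cases hx : x = inl i0
    · subst hx
      exact Or.inr (Or.inl ⟨rfl, (hleaf y).1 hxy⟩)
    by_cases hy : y = inl i0
    · subst hy
      exact Or.inr (Or.inr ⟨(hleaf x).1 hxy.symm, rfl⟩)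
    · refine Or.inl ⟨unemb i0 x hx, unemb i0 y hy, ?_, emb_unemb i0 x hx, emb_unemb i0 y hy⟩
      simpa only [SimpleGraph.comap_adj, emb_unemb] using hxy

lemma card_nbrs_eq (G : SimpleGraph (A ⊕ B)) (x : {i : A // i ≠ i0} ⊕ B)
    (hno : ¬ G.Adj (emb i0 x) (inl i0)) :
    Nat.card {w // (G.comap (emb i0)).Adj x w} = Nat.card {w // G.Adj (emb i0 x) w} := by
  apply Nat.card_congr
  refine ⟨fun w => ⟨emb i0 w.1, by simpa using w.2⟩,
    fun w => ⟨unemb i0 w.1 (fun e => hno (e ▸ w.2)), by simp [w.2]⟩, ?_, ?_⟩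
  · rintro ⟨w, hw⟩
    exact Subtype.ext (unemb_emb i0 w _)
  · rintro ⟨w, hw⟩
    exact Subtype.ext (emb_unemb i0 w _)

lemma card_nbrs_succ [Finite A] [Finite B] (G : SimpleGraph (A ⊕ B))
    (x : {i : A // i ≠ i0} ⊕ B) (hyes : G.Adj (emb i0 x) (inl i0)) :
    Nat.card {w // G.Adj (emb i0 x) w} =
      Nat.card {w // (G.comap (emb i0)).Adj x w} + 1 := by
  classical
  rw [← nat_card_option]
  apply Nat.card_congr
  refine ⟨fun w => if hw : w.1 = inl i0 then none else
      some ⟨unemb i0 w.1 hw, by simp [w.2]⟩,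
    fun o => o.elim ⟨inl i0, hyes⟩ (fun w => ⟨emb i0 w.1, by simpa using w.2⟩), ?_, ?_⟩
  · rintro ⟨w, hw⟩
    by_cases h : w = inl i0
    · subst h; simp
    · simp only [h, dif_neg, not_false_iff]
      simp [Option.elim, emb_unemb]
  · rintro (_ | ⟨w, hw⟩)
    · simp
    · simp only [Option.elim]
      simp only [emb_ne i0 w, ↓reduceDIte]
      simp [unemb_emb]
end Ext
set_option linter.unusedSectionVars false
section Main
variable {A B : Type} [Fintype A] [Fintype B]

def Good (a : A → ℕ) (b : B → ℕ) (T : SimpleGraph (A ⊕ B)) : Prop :=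
  T ≤ completeBipartiteGraph A B ∧ T.IsTree ∧
  (∀ i, Nat.card {w // T.Adj (Sum.inl i) w} = a i) ∧
  (∀ j, Nat.card {w // T.Adj (Sum.inr j) w} = b j)

lemma leaf_unique {a : A → ℕ} {b : B → ℕ} {T : SimpleGraph (A ⊕ B)}
    (hT : Good a b T) {i0 : A} (h1 : a i0 = 1) :
    ∃ j : B, ∀ w, T.Adj (inl i0) w ↔ w = inr j := by
  have hdeg := hT.2.2.1 i0
  rw [h1, Nat.card_eq_one_iff_exists] at hdeg
  obtain ⟨⟨w0, hw0⟩, hu⟩ := hdeg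
  obtain (i | j) := w0
  · exact absurd (hT.1 hw0) (by simp)
  · refine ⟨j, fun w => ⟨fun hw => ?_, fun hw => hw ▸ hw0⟩⟩
    exact congrArg Subtype.val (hu ⟨w, hw⟩)

lemma leaf_unique_right {a : A → ℕ} {b : B → ℕ} {T : SimpleGraph (A ⊕ B)}
    (hT : Good a b T) {j0 : B} (h1 : b j0 = 1) :
    ∃ i : A, ∀ w, T.Adj (inr j0) w ↔ w = inl i := by
  have hdeg := hT.2.2.2 j0
  rw [h1, Nat.card_eq_one_iff_exists] at hdeg
  obtain ⟨⟨w0, hw0⟩, hu⟩ := hdeg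
  obtain (i | j) := w0
  · refine ⟨i, fun w => ⟨fun hw => ?_, fun hw => hw ▸ hw0⟩⟩
    exact congrArg Subtype.val (hu ⟨w, hw⟩)
  · exact absurd (hT.1 hw0) (by simp)

variable [DecidableEq A] [DecidableEq B]

lemma path_avoids_leaf {T : SimpleGraph (A ⊕ B)} {i0 : A} {j : B}
    (hleaf : ∀ w, T.Adj (inl i0) w ↔ w = inr j)
    {x y : A ⊕ B} (hx : x ≠ inl i0) (hy : y ≠ inl i0)
    (p : T.Walk x y) (hp : p.IsPath) : inl i0 ∉ p.support := by
  intro hmem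
  set p1 := p.takeUntil (inl i0) hmem with hp1def
  set p2 := p.dropUntil (inl i0) hmem with hp2def
  -- second vertex of p2 is inr j, in p2.support.tail
  obtain ⟨z2, h3, q3, hq3⟩ := SimpleGraph.Walk.exists_eq_cons_of_ne (Ne.symm hy) p2
  have hz2 : z2 = inr j := (hleaf z2).1 h3
  have hmem2 : inr j ∈ p2.support.tail := by
    rw [hq3, SimpleGraph.Walk.support_cons]
    exact hz2 ▸ q3.start_mem_support
  -- next-to-last vertex of p1 is inr j, in p1.support
  obtain ⟨z1, h2, q2, hq2⟩ := SimpleGraph.Walk.exists_eq_cons_of_ne (Ne.symm hx) p1.reverse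
  have hz1 : z1 = inr j := (hleaf z1).1 h2
  have hmem1 : inr j ∈ p1.support := by
    rw [← List.mem_reverse, ← SimpleGraph.Walk.support_reverse, hq2,
      SimpleGraph.Walk.support_cons]
    exact List.mem_cons_of_mem _ (hz1 ▸ q2.start_mem_support)
  have hnd := hp.support_nodup
  rw [← SimpleGraph.Walk.take_spec p hmem, SimpleGraph.Walk.support_append,
    List.nodup_append] at hnd
  exact hnd.2.2 _ hmem1 _ hmem2 rfl

lemma good_comap [Nonempty B] {a : A → ℕ} {b : B → ℕ} {T : SimpleGraph (A ⊕ B)} {i0 : A} {j : B}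
    (hT : Good a b T) (ha0 : a i0 = 1) (hadj : T.Adj (inl i0) (inr j)) :
    Good (fun i : {i : A // i ≠ i0} => a i.1)
      (fun k => if k = j then b j - 1 else b k) (T.comap (emb i0)) := by
  obtain ⟨j', hleaf'⟩ := leaf_unique hT ha0
  have hjj : j = j' := by simpa using (hleaf' (inr j)).1 hadj
  subst hjj
  have hleaf := hleaf'
  refine ⟨?_, ⟨?_, ?_⟩, ?_, ?_⟩
  · -- ≤ complete bipartite
    intro x y h
    have := hT.1 h
    cases x <;> cases y <;> simp_all [emb]
  · -- connected
    constructor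
    intro x y
    obtain ⟨p, hp, -⟩ := hT.2.1.existsUnique_path (emb i0 x) (emb i0 y)
    have hav := path_avoids_leaf hleaf (emb_ne i0 x) (emb_ne i0 y) p hp
    have := lift_reachable i0 p (emb_ne i0 x) (emb_ne i0 y) hav
    rwa [unemb_emb, unemb_emb] at this
  · -- acyclic
    intro v c hc
    have hmap := hc.map (f := (SimpleGraph.Embedding.comap ⟨emb i0, emb_inj i0⟩ T).toHom)
      (fun x y => by exact fun h => emb_inj i0 h)
    exact hT.2.1.IsAcyclic _ hmap
  · -- degrees on the left
    rintro ⟨i, hi⟩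
    have hno : ¬ T.Adj (emb i0 (inl ⟨i, hi⟩)) (inl i0) := by
      intro h
      simpa [emb] using hT.1 h
    rw [card_nbrs_eq i0 T _ hno]
    exact hT.2.2.1 i
  · -- degrees on the right
    intro k
    by_cases hk : k = j
    · subst hk
      have hyes : T.Adj (emb i0 (inr k)) (inl i0) := hadj.symm
      have h2 := card_nbrs_succ i0 T (inr k) hyes
      simp only [emb_inr] at h2
      rw [hT.2.2.2 k] at h2
      show Nat.card {w // (T.comap (emb i0)).Adj (inr k) w} = if k = k then b k - 1 else b k
      rw [if_pos rfl]
      omega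
    · have hno : ¬ T.Adj (emb i0 (inr k)) (inl i0) := by
        intro h
        have := (hleaf (inr k)).1 h.symm
        simp_all
      have h2 := card_nbrs_eq i0 T (inr k) hno
      simp only [emb_inr] at h2
      show Nat.card {w // (T.comap (emb i0)).Adj (inr k) w} = if k = j then b j - 1 else b k
      rw [if_neg hk, h2]
      exact hT.2.2.2 k

end Main
section Main2
variable {A B : Type} [Fintype A] [Fintype B] [DecidableEq A] [DecidableEq B]

lemma extG_leaf (i0 : A) (j : B) (T' : SimpleGraph ({i : A // i ≠ i0} ⊕ B)) :
    ∀ w, (extG i0 j T').Adj (inl i0) w ↔ w = inr j := by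
  intro w
  rw [extG_adj]
  constructor
  · rintro (⟨x', y', h, hx, rfl⟩ | ⟨-, rfl⟩ | ⟨hx, -⟩)
    · exact absurd hx (emb_ne i0 x')
    · rfl
    · exact absurd hx.symm (by simp)
  · rintro rfl
    exact Or.inr (Or.inl ⟨rfl, rfl⟩)

def extHom (i0 : A) (j : B) (T' : SimpleGraph ({i : A // i ≠ i0} ⊕ B)) :
    T' →g extG i0 j T' :=
  ⟨emb i0, fun {u v} h => (extG_adj i0 j T' _ _).2 (Or.inl ⟨u, v, h, rfl, rfl⟩)⟩

@[simp] lemma extHom_apply (i0 : A) (j : B) (T' : SimpleGraph ({i : A // i ≠ i0} ⊕ B))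
    (x : {i : A // i ≠ i0} ⊕ B) : extHom i0 j T' x = emb i0 x := rfl

lemma good_extG {a : A → ℕ} {b : B → ℕ} {i0 : A} {j : B}
    {T' : SimpleGraph ({i : A // i ≠ i0} ⊕ B)}
    (hT' : Good (fun i : {i : A // i ≠ i0} => a i.1)
      (fun k => if k = j then b j - 1 else b k) T')
    (ha0 : a i0 = 1) (hbj : 1 ≤ b j) :
    Good a b (extG i0 j T') := by
  have hadj : (extG i0 j T').Adj (inl i0) (inr j) := (extG_leaf i0 j T' (inr j)).2 rfl
  have hleaf := extG_leaf i0 j T'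
  have hcomap : (extG i0 j T').comap (emb i0) = T' := comap_extG i0 j T'
  refine ⟨?_, ⟨?_, ?_⟩, ?_, ?_⟩
  · intro x y h
    rw [extG_adj] at h
    rcases h with ⟨x', y', h, rfl, rfl⟩ | ⟨rfl, rfl⟩ | ⟨rfl, rfl⟩
    · have := hT'.1 h
      cases x' <;> cases y' <;> simp_all
    · simp
    · simp
  · have hreach : ∀ x : A ⊕ B, (extG i0 j T').Reachable x (inr j) := by
      intro x
      by_cases hx : x = inl i0
      · subst hx; exact hadj.reachable
      · have hr := hT'.2.1.isConnected.preconnected (unemb i0 x hx) (inr j)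
        have h6 := SimpleGraph.Reachable.map (extHom i0 j T') hr
        simp only [extHom_apply, emb_unemb, emb_inr] at h6
        exact h6
    have hne : Nonempty (A ⊕ B) := ⟨inl i0⟩
    exact SimpleGraph.Connected.mk (fun x y => (hreach x).trans (hreach y).symm)
  · intro v c hc
    have hsup : inl i0 ∉ c.support := leaf_not_in_cycle (fun x h => (hleaf x).1 h) c hc
    have hv : v ≠ inl i0 := fun hv => hsup (hv ▸ c.start_mem_support)
    have h5 := lift_cycle i0 c hc hv hsup
    rw [hcomap] at h5
    obtain ⟨q, hq⟩ := h5
    exact hT'.2.1.IsAcyclic q hq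
  · intro i
    by_cases hi : i = i0
    · subst hi
      rw [ha0]
      exact nat_card_unique ((hleaf (inr j)).2 rfl) (fun x h => (hleaf x).1 h)
    · have hno : ¬ (extG i0 j T').Adj (emb i0 (inl ⟨i, hi⟩)) (inl i0) := by
        intro h
        have := (hleaf _).1 h.symm
        simp at this
      have h2 := card_nbrs_eq i0 (extG i0 j T') (inl ⟨i, hi⟩) hno
      rw [hcomap] at h2
      simp only [emb_inl] at h2
      rw [← h2]
      exact hT'.2.2.1 ⟨i, hi⟩
  · intro k
    by_cases hk : k = j
    · subst hk
      have hyes : (extG i0 k T').Adj (emb i0 (inr k)) (inl i0) := hadj.symm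
      have h2 := card_nbrs_succ i0 (extG i0 k T') (inr k) hyes
      rw [hcomap] at h2
      simp only [emb_inr] at h2
      have h3 : Nat.card {w // T'.Adj (inr k) w} = b k - 1 := by
        simpa using hT'.2.2.2 k
      rw [h2, h3]
      omega
    · have hno : ¬ (extG i0 j T').Adj (emb i0 (inr k)) (inl i0) := by
        intro h
        have := (hleaf _).1 h.symm
        simp only [emb_inr, inr.injEq] at this
        exact hk this
      have h2 := card_nbrs_eq i0 (extG i0 j T') (inr k) hno
      rw [hcomap] at h2
      simp only [emb_inr] at h2
      rw [← h2]
      simpa [hk] using hT'.2.2.2 k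

end Main2
section Main3
variable {A B : Type} [Fintype A] [Fintype B] [DecidableEq A] [DecidableEq B]

lemma nat_card_sigma {β : Type} [Fintype β] (S : β → Type) [∀ j, Finite (S j)] :
    Nat.card (Σ j, S j) = ∑ j, Nat.card (S j) := by
  haveI : ∀ j, Fintype (S j) := fun j => Fintype.ofFinite _
  rw [Nat.card_eq_fintype_card, Fintype.card_sigma]
  simp [Nat.card_eq_fintype_card]

lemma card_split {a : A → ℕ} {b : B → ℕ} {i0 : A} (ha0 : a i0 = 1) :
    Nat.card {T : SimpleGraph (A ⊕ B) // Good a b T} =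
      ∑ j : B, Nat.card {T : SimpleGraph (A ⊕ B) // Good a b T ∧ T.Adj (inl i0) (inr j)} := by
  rw [← nat_card_sigma]
  apply Nat.card_congr
  refine ⟨fun T => ⟨(leaf_unique T.2 ha0).choose,
      ⟨T.1, T.2, ((leaf_unique T.2 ha0).choose_spec (inr _)).2 rfl⟩⟩,
    fun s => ⟨s.2.1, s.2.2.1⟩, fun T => rfl, ?_⟩
  rintro ⟨j, T, hT, hadj⟩
  have hj : (leaf_unique hT ha0).choose = j := by
    have := ((leaf_unique hT ha0).choose_spec (inr j)).1 hadj
    injection this.symm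
  subst hj
  rfl

lemma isTree_map {V W : Type} {G : SimpleGraph V} {H : SimpleGraph W}
    (e : G ≃g H) (h : G.IsTree) : H.IsTree := by
  refine ⟨(SimpleGraph.Iso.connected_iff e).1 h.isConnected, ?_⟩
  intro v c hc
  exact h.IsAcyclic _ (hc.map (f := e.symm.toHom) (fun x y => by
    intro hxy
    exact e.symm.toEquiv.injective hxy))

lemma good_swap {a : A → ℕ} {b : B → ℕ} {T : SimpleGraph (A ⊕ B)} (hT : Good a b T) :
    Good b a (T.comap (Equiv.sumComm B A)) := by
  have hiso : T.comap ⇑(Equiv.sumComm B A) ≃g T :=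
    SimpleGraph.Iso.comap (Equiv.sumComm B A) T
  refine ⟨?_, isTree_map hiso.symm hT.2.1, ?_, ?_⟩
  · intro x y h
    have := hT.1 h
    cases x <;> cases y <;> simp_all
  · intro j
    have : Nat.card {w // (T.comap ⇑(Equiv.sumComm B A)).Adj (inl j) w} =
        Nat.card {w // T.Adj (inr j) w} :=
      Nat.card_congr (Equiv.subtypeEquiv (Equiv.sumComm B A) (fun w => Iff.rfl))
    rw [this]
    exact hT.2.2.2 j
  · intro i
    have : Nat.card {w // (T.comap ⇑(Equiv.sumComm B A)).Adj (inr i) w} =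
        Nat.card {w // T.Adj (inl i) w} :=
      Nat.card_congr (Equiv.subtypeEquiv (Equiv.sumComm B A) (fun w => Iff.rfl))
    rw [this]
    exact hT.2.2.1 i

lemma card_good_swap (a : A → ℕ) (b : B → ℕ) :
    Nat.card {T : SimpleGraph (A ⊕ B) // Good a b T} =
      Nat.card {T : SimpleGraph (B ⊕ A) // Good b a T} := by
  apply Nat.card_congr
  refine ⟨fun T => ⟨T.1.comap (Equiv.sumComm B A), good_swap T.2⟩,
    fun T => ⟨T.1.comap (Equiv.sumComm A B), good_swap T.2⟩, ?_, ?_⟩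
  · rintro ⟨T, hT⟩
    apply Subtype.ext
    ext x y
    cases x <;> cases y <;> simp
  · rintro ⟨T, hT⟩
    apply Subtype.ext
    ext x y
    cases x <;> cases y <;> simp

lemma card_del {a : A → ℕ} {b : B → ℕ} {i0 : A} {j : B} [Nonempty B]
    (ha0 : a i0 = 1) (hbj : 1 ≤ b j) :
    Nat.card {T : SimpleGraph (A ⊕ B) // Good a b T ∧ T.Adj (inl i0) (inr j)} =
      Nat.card {T' : SimpleGraph ({i : A // i ≠ i0} ⊕ B) //
        Good (fun i => a i.1) (fun k => if k = j then b j - 1 else b k) T'} := by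
  apply Nat.card_congr
  refine ⟨fun T => ⟨T.1.comap (emb i0), good_comap T.2.1 ha0 T.2.2⟩,
    fun T' => ⟨extG i0 j T'.1, good_extG T'.2 ha0 hbj, (extG_leaf i0 j T'.1 (inr j)).2 rfl⟩,
    ?_, ?_⟩
  · rintro ⟨T, hT, hadj⟩
    apply Subtype.ext
    obtain ⟨j', hleaf'⟩ := leaf_unique hT ha0
    have hjj : j = j' := by simpa using (hleaf' (inr j)).1 hadj
    subst hjj
    exact extG_comap i0 j hleaf'
  · rintro ⟨T', hT'⟩
    exact Subtype.ext (comap_extG i0 j T')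

lemma card_del_zero {i0 : A} {a' : {i : A // i ≠ i0} → ℕ} {b' : B → ℕ} {j : B}
    (hbj : b' j = 0) (hA : Nonempty {i : A // i ≠ i0}) :
    Nat.card {T' : SimpleGraph ({i : A // i ≠ i0} ⊕ B) // Good a' b' T'} = 0 := by
  haveI : IsEmpty {T' : SimpleGraph ({i : A // i ≠ i0} ⊕ B) // Good a' b' T'} := by
    constructor
    rintro ⟨T', hT'⟩
    obtain ⟨i1⟩ := hA
    have hr := hT'.2.1.isConnected.preconnected (inr j) (inl i1)
    obtain ⟨p⟩ := hr
    obtain ⟨z, hz, q, -⟩ := SimpleGraph.Walk.exists_eq_cons_of_ne (by simp) p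
    haveI : Nonempty {w // T'.Adj (inr j) w} := ⟨⟨z, hz⟩⟩
    have hpos : 0 < Nat.card {w // T'.Adj (inr j) w} := Nat.card_pos
    rw [hT'.2.2.2 j, hbj] at hpos
    exact absurd hpos (by simp)
  exact Nat.card_of_isEmpty
end Main3
section Main4
variable {A B : Type} [Fintype A] [Fintype B] [DecidableEq A] [DecidableEq B]

lemma base_case {a : A → ℕ} {b : B → ℕ} (hA : Fintype.card A = 1) (hB : Fintype.card B = 1)
    (ha : ∀ i, a i = 1) (hb : ∀ j, b j = 1) :
    Nat.card {T : SimpleGraph (A ⊕ B) // Good a b T} = 1 := by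
  obtain ⟨u0, hu0⟩ := Fintype.card_eq_one_iff.1 hA
  obtain ⟨v0, hv0⟩ := Fintype.card_eq_one_iff.1 hB
  have hKL : ∀ i : A, ∀ x, (completeBipartiteGraph A B).Adj (inl i) x → x = inr v0 := by
    rintro i (i' | k) h
    · simp at h
    · rw [hv0 k]
  have hKR : ∀ k : B, ∀ x, (completeBipartiteGraph A B).Adj (inr k) x → x = inl u0 := by
    rintro k (i | k') h
    · rw [hu0 i]
    · simp at h
  have hgood : Good a b (completeBipartiteGraph A B) := by
    refine ⟨le_rfl, ⟨?_, ?_⟩, ?_, ?_⟩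
    · haveI : Nonempty (A ⊕ B) := ⟨inl u0⟩
      apply SimpleGraph.Connected.mk
      rintro (i | k) (i' | k')
      · rw [hu0 i, hu0 i']
      · exact ((by simp : (completeBipartiteGraph A B).Adj (inl i) (inr k'))).reachable
      · exact ((by simp : (completeBipartiteGraph A B).Adj (inl i') (inr k))).reachable.symm
      · rw [hv0 k, hv0 k']
    · rintro (i | k) c hc
      · exact no_cycle_at_leaf (hKL i) c hc
      · exact no_cycle_at_leaf (hKR k) c hc
    · intro i
      rw [ha i]
      refine nat_card_unique ?_ (hKL i)
      have : i = u0 := hu0 i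
      simp
    · intro k
      rw [hb k]
      refine nat_card_unique ?_ (hKR k)
      simp
  refine nat_card_unique hgood (fun T hT => ?_)
  apply le_antisymm hT.1
  have hTadj : T.Adj (inl u0) (inr v0) := by
    obtain ⟨p⟩ := hT.2.1.isConnected.preconnected (inl u0) (inr v0)
    obtain ⟨z, hz, q, -⟩ := SimpleGraph.Walk.exists_eq_cons_of_ne (by simp) p
    cases z with
    | inl i => exact absurd (hT.1 hz) (by simp)
    | inr k => rwa [hv0 k] at hz
  intro x y hxy
  rcases x with i | k <;> rcases y with i' | k'
  · simp at hxy
  · rw [hu0 i, hv0 k']; exact hTadj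
  · rw [hu0 i', hv0 k]; exact hTadj.symm
  · simp at hxy
end Main4
section Main5

lemma card_subtype_ne {A : Type} [Fintype A] [DecidableEq A] (i0 : A) :
    Fintype.card {i : A // i ≠ i0} = Fintype.card A - 1 := by
  rw [Fintype.card_subtype_compl (p := fun i => i = i0), Fintype.card_subtype_eq]

lemma step_left (A B : Type) [Fintype A] [Fintype B] [DecidableEq A] [DecidableEq B]
    (a : A → ℕ) (b : B → ℕ) (hBne : Nonempty B)
    (i0 : A) (ha0 : a i0 = 1) (hA2 : 2 ≤ Fintype.card A)
    (ha : ∀ i, 0 < a i) (hb : ∀ j, 0 < b j)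
    (hsa : ∑ i, a i = Fintype.card A + Fintype.card B - 1)
    (hsb : ∑ j, b j = Fintype.card A + Fintype.card B - 1)
    (IH : ∀ (A' B' : Type) [Fintype A'] [Fintype B'] [DecidableEq A'] [DecidableEq B'],
      Fintype.card A' + Fintype.card B' + 1 = Fintype.card A + Fintype.card B →
      ∀ (a' : A' → ℕ) (b' : B' → ℕ), Nonempty A' → Nonempty B' →
      (∀ i, 0 < a' i) → (∀ j, 0 < b' j) →
      (∑ i, a' i = Fintype.card A' + Fintype.card B' - 1) →
      (∑ j, b' j = Fintype.card A' + Fintype.card B' - 1) →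
      Nat.card {T : SimpleGraph (A' ⊕ B') // Good a' b' T} *
        ((∏ i, (a' i - 1).factorial) * ∏ j, (b' j - 1).factorial) =
      (Fintype.card A' - 1).factorial * (Fintype.card B' - 1).factorial) :
    Nat.card {T : SimpleGraph (A ⊕ B) // Good a b T} *
      ((∏ i, (a i - 1).factorial) * ∏ j, (b j - 1).factorial) =
    (Fintype.card A - 1).factorial * (Fintype.card B - 1).factorial := by
  haveI : Nonempty B := hBne
  have hcA' : Fintype.card {i : A // i ≠ i0} = Fintype.card A - 1 := card_subtype_ne i0
  haveI hA'ne : Nonempty {i : A // i ≠ i0} := by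
    obtain ⟨i1, hi1⟩ := Fintype.exists_ne_of_one_lt_card (by omega) i0
    exact ⟨⟨i1, hi1⟩⟩
  have hcB : 1 ≤ Fintype.card B := Fintype.card_pos
  -- the product over A' equals the product over A
  have hprodA : (∏ i : {i : A // i ≠ i0}, (a i.1 - 1).factorial) =
      ∏ i : A, (a i - 1).factorial := by
    rw [← Finset.prod_subtype (Finset.univ.erase i0) (fun x => by simp) 
        (fun i => (a i - 1).factorial)]
    exact Finset.prod_erase _ (by simp [ha0])
  -- sum over A'
  have hsumA : (∑ i : {i : A // i ≠ i0}, a i.1) + 1 = ∑ i : A, a i := by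
    rw [← Finset.sum_subtype (Finset.univ.erase i0) (fun x => by simp) a, ← ha0]
    exact Finset.sum_erase_add _ _ (Finset.mem_univ i0)
  -- split the count according to the neighbor of the leaf i0
  rw [card_split (b := b) ha0, Finset.sum_mul]
  have hterm : ∀ j : B,
      Nat.card {T : SimpleGraph (A ⊕ B) // Good a b T ∧ T.Adj (inl i0) (inr j)} *
        ((∏ i, (a i - 1).factorial) * ∏ j, (b j - 1).factorial) =
      (b j - 1) * ((Fintype.card A - 2).factorial * (Fintype.card B - 1).factorial) := by
    intro j
    rw [card_del ha0 (hb j)]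
    by_cases hbj : b j = 1
    · rw [card_del_zero (i0 := i0) (b' := fun k => if k = j then b j - 1 else b k) (j := j)
        (by simp [hbj]) hA'ne, hbj]
      simp
    · -- b j ≥ 2 : apply the induction hypothesis
      have hbj2 : 2 ≤ b j := by have := hb j; omega
      set b' : B → ℕ := fun k => if k = j then b j - 1 else b k with hb'def
      have hprodB : (b j - 1) * ∏ k, (b' k - 1).factorial = ∏ k, (b k - 1).factorial := by
        rw [← Finset.mul_prod_erase Finset.univ (fun k => (b' k - 1).factorial)
            (Finset.mem_univ j),
          ← Finset.mul_prod_erase Finset.univ (fun k => (b k - 1).factorial)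
            (Finset.mem_univ j)]
        have h1 : ∀ k ∈ Finset.univ.erase j, (b' k - 1).factorial = (b k - 1).factorial := by
          intro k hk
          rw [Finset.mem_erase] at hk
          simp [hb'def, hk.1]
        rw [Finset.prod_congr rfl h1, ← mul_assoc]
        congr 1
        have hb'j : b' j = b j - 1 := by simp [hb'def]
        rw [hb'j]
        exact Nat.mul_factorial_pred (by omega)
      have hsumB : (∑ k, b' k) + 1 = ∑ k, b k := by
        have h1 : ∀ k ∈ Finset.univ.erase j, b' k = b k := by
          intro k hk
          rw [Finset.mem_erase] at hk
          simp [hb'def, hk.1]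
        have e1 := Finset.sum_erase_add Finset.univ b' (Finset.mem_univ j)
        have e2 := Finset.sum_erase_add Finset.univ b (Finset.mem_univ j)
        have e3 : ∑ x ∈ Finset.univ.erase j, b' x = ∑ x ∈ Finset.univ.erase j, b x :=
          Finset.sum_congr rfl h1
        have e4 : b' j = b j - 1 := by simp [hb'def]
        have := hb j
        omega
      have hIH := IH {i : A // i ≠ i0} B (by omega) (fun i => a i.1) b' hA'ne hBne
        (fun i => ha i.1)
        (fun k => by
          by_cases hk : k = j
          · subst hk; simp only [hb'def, if_pos rfl]; omega
          · simp only [hb'def, if_neg hk]; exact hb k)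
        (by show (∑ i : {i : A // i ≠ i0}, a i.1) = _; omega)
        (by omega)
      rw [hprodA, hcA'] at hIH
      calc Nat.card {T' : SimpleGraph ({i : A // i ≠ i0} ⊕ B) //
            Good (fun i => a i.1) b' T'} *
          ((∏ i, (a i - 1).factorial) * ∏ k, (b k - 1).factorial)
          = (b j - 1) * (Nat.card {T' : SimpleGraph ({i : A // i ≠ i0} ⊕ B) //
            Good (fun i => a i.1) b' T'} *
            ((∏ i, (a i - 1).factorial) * ∏ k, (b' k - 1).factorial)) := by
            rw [← hprodB]; ring
        _ = (b j - 1) * ((Fintype.card A - 1 - 1).factorial *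
            (Fintype.card B - 1).factorial) := by rw [hIH]
        _ = (b j - 1) * ((Fintype.card A - 2).factorial *
            (Fintype.card B - 1).factorial) := by
            rw [show Fintype.card A - 1 - 1 = Fintype.card A - 2 from by omega]
  rw [Finset.sum_congr rfl (fun j _ => hterm j), ← Finset.sum_mul]
  have hsumb1 : (∑ j, (b j - 1)) = Fintype.card A - 1 := by
    have h1 : (∑ j, (b j - 1)) + ∑ _j : B, 1 = ∑ j, b j := by
      rw [← Finset.sum_add_distrib]
      exact Finset.sum_congr rfl (fun j _ => by have := hb j; omega)
    simp only [Finset.sum_const, Finset.card_univ, smul_eq_mul, mul_one] at h1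
    omega
  rw [hsumb1, ← mul_assoc]
  congr 1
  rw [show Fintype.card A - 2 = Fintype.card A - 1 - 1 from by omega]
  exact Nat.mul_factorial_pred (by omega)
end Main5
theorem key : ∀ (N : ℕ) (A B : Type) [Fintype A] [Fintype B] [DecidableEq A] [DecidableEq B],
    Fintype.card A + Fintype.card B = N → ∀ (a : A → ℕ) (b : B → ℕ),
    Nonempty A → Nonempty B →
    (∀ i, 0 < a i) → (∀ j, 0 < b j) →
    (∑ i, a i = Fintype.card A + Fintype.card B - 1) →
    (∑ j, b j = Fintype.card A + Fintype.card B - 1) →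
    Nat.card {T : SimpleGraph (A ⊕ B) // Good a b T} *
      ((∏ i, (a i - 1).factorial) * ∏ j, (b j - 1).factorial) =
    (Fintype.card A - 1).factorial * (Fintype.card B - 1).factorial := by
  intro N
  induction N using Nat.strong_induction_on with
  | _ N IHN =>
  intro A B _ _ _ _ hN a b hAne hBne ha hb hsa hsb
  have hcA : 1 ≤ Fintype.card A := Fintype.card_pos
  have hcB : 1 ≤ Fintype.card B := Fintype.card_pos
  by_cases hstepA : ∃ i0, a i0 = 1 ∧ 2 ≤ Fintype.card A
  · obtain ⟨i0, ha0, hA2⟩ := hstepA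
    exact step_left A B a b hBne i0 ha0 hA2 ha hb hsa hsb
      (fun A' B' _ _ _ _ hm a' b' hA'ne hB'ne ha' hb' hsa' hsb' =>
        IHN (Fintype.card A' + Fintype.card B') (by omega) A' B' rfl a' b'
          hA'ne hB'ne ha' hb' hsa' hsb')
  · by_cases hstepB : ∃ j0, b j0 = 1 ∧ 2 ≤ Fintype.card B
    · obtain ⟨j0, hb0, hB2⟩ := hstepB
      rw [card_good_swap a b]
      have hres := step_left B A b a hAne j0 hb0 hB2 hb ha (by omega) (by omega)
        (fun A' B' _ _ _ _ hm a' b' hA'ne hB'ne ha' hb' hsa' hsb' =>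
          IHN (Fintype.card A' + Fintype.card B') (by omega) A' B' rfl a' b'
            hA'ne hB'ne ha' hb' hsa' hsb')
      rw [show (∏ i, (a i - 1).factorial) * ∏ j, (b j - 1).factorial =
          (∏ j, (b j - 1).factorial) * ∏ i, (a i - 1).factorial from mul_comm _ _,
        show ((Fintype.card A - 1).factorial * (Fintype.card B - 1).factorial) =
          ((Fintype.card B - 1).factorial * (Fintype.card A - 1).factorial) from mul_comm _ _]
      exact hres
    · -- base case : both singletons
      push_neg at hstepA hstepB
      have hA1 : Fintype.card A = 1 := by
        by_contra hA1
        have hA2 : 2 ≤ Fintype.card A := by omega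
        have ha2 : ∀ i, 2 ≤ a i := by
          intro i
          have h3 := hstepA i
          have h4 := ha i
          by_contra h5
          have := h3 (by omega)
          omega
        have hs2 : Finset.univ.card • 2 ≤ ∑ i, a i :=
          Finset.card_nsmul_le_sum Finset.univ a 2 (fun i _ => ha2 i)
        simp only [Finset.card_univ, smul_eq_mul] at hs2
        have hB2 : 2 ≤ Fintype.card B := by omega
        have hb2 : ∀ j, 2 ≤ b j := by
          intro j
          have h3 := hstepB j
          have h4 := hb j
          by_contra h5
          have := h3 (by omega)
          omega
        have hs3 : Finset.univ.card • 2 ≤ ∑ j, b j :=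
          Finset.card_nsmul_le_sum Finset.univ b 2 (fun j _ => hb2 j)
        simp only [Finset.card_univ, smul_eq_mul] at hs3
        omega
      have hB1 : Fintype.card B = 1 := by
        by_contra hB1
        have hB2 : 2 ≤ Fintype.card B := by omega
        have hb2 : ∀ j, 2 ≤ b j := by
          intro j
          have h3 := hstepB j
          have h4 := hb j
          by_contra h5
          have := h3 (by omega)
          omega
        have hs3 : Finset.univ.card • 2 ≤ ∑ j, b j :=
          Finset.card_nsmul_le_sum Finset.univ b 2 (fun j _ => hb2 j)
        simp only [Finset.card_univ, smul_eq_mul] at hs3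
        omega
      have haall : ∀ i, a i = 1 := by
        intro i
        have h5 : a i ≤ ∑ i, a i :=
          Finset.single_le_sum (fun i _ => Nat.zero_le (a i)) (Finset.mem_univ i)
        have h6 := ha i
        omega
      have hball : ∀ j, b j = 1 := by
        intro j
        have h5 : b j ≤ ∑ j, b j :=
          Finset.single_le_sum (fun j _ => Nat.zero_le (b j)) (Finset.mem_univ j)
        have h6 := hb j
        omega
      rw [base_case hA1 hB1 haall hball, hA1, hB1]
      have hpa : (∏ i, (a i - 1).factorial) = 1 :=
        Finset.prod_eq_one (fun i _ => by simp [haall i])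
      have hpb : (∏ j, (b j - 1).factorial) = 1 :=
        Finset.prod_eq_one (fun j _ => by simp [hball j])
      rw [hpa, hpb]
      norm_num


end Aux


theorem stmt_4 (m n : ℕ) (hm : 1 ≤ m) (hn : 1 ≤ n)
    (a : Fin m → ℕ) (b : Fin n → ℕ) (ha : ∀ i, 0 < a i) (hb : ∀ j, 0 < b j)
    (hsa : ∑ i, a i = m + n - 1) (hsb : ∑ j, b j = m + n - 1) :
    Nat.card {T : SimpleGraph (Fin m ⊕ Fin n) //
        T ≤ completeBipartiteGraph (Fin m) (Fin n) ∧ T.IsTree ∧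
        (∀ i, Nat.card {w // T.Adj (Sum.inl i) w} = a i) ∧
        (∀ j, Nat.card {w // T.Adj (Sum.inr j) w} = b j)} =
      ((m - 1).factorial * (n - 1).factorial) /
        ((∏ i, (a i - 1).factorial) * ∏ j, (b j - 1).factorial) := by
  haveI : Nonempty (Fin m) := ⟨⟨0, hm⟩⟩
  haveI : Nonempty (Fin n) := ⟨⟨0, hn⟩⟩
  have hkey := key (m + n) (Fin m) (Fin n) (by simp) a b ‹_› ‹_› ha hb
    (by simpa using hsa) (by simpa using hsb)
  simp only [Fintype.card_fin] at hkey
  have hD : 0 < (∏ i, (a i - 1).factorial) * ∏ j, (b j - 1).factorial :=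
    Nat.mul_pos (Finset.prod_pos (fun i _ => Nat.factorial_pos _))
      (Finset.prod_pos (fun j _ => Nat.factorial_pos _))
  have hN : Nat.card {T : SimpleGraph (Fin m ⊕ Fin n) //
      T ≤ completeBipartiteGraph (Fin m) (Fin n) ∧ T.IsTree ∧
      (∀ i, Nat.card {w // T.Adj (Sum.inl i) w} = a i) ∧
      (∀ j, Nat.card {w // T.Adj (Sum.inr j) w} = b j)} =
      Nat.card {T : SimpleGraph (Fin m ⊕ Fin n) // Good a b T} := rfl
  rw [hN, ← hkey]
  exact (Nat.mul_div_cancel _ hD).symm
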